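/- Let C ∈ {B,W}, t ∈ ℕ, and let v̂, û be nodes of Ĥ_{C,d} with dist(v̂, v̂_C) < 2d − t and dist(û, v̂_C) < 2d − t (where v̂_C = ∅ is the root and dist is graph distance). If v̂ and û are t-SV-bisimilar in (Ĥ_{C,d}, f_C, p_C), then the corresponding nodes v and u are t-SV-bisimilar in (H_{C,d}, f_C, p_C). -/

import Mathlib

namespace Paper

/-- The degree of a vertex: the number of its neighbours. -/
noncomputable def deg {V : Type} (G : SimpleGraph V) (v : V) : ℕ :=
  {u | G.Adj v u}.ncard

/-- A port numbering of a graph, modelled as a partial map sending each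
output port `(v, i)` with `1 ≤ i ≤ deg v` to an input port `(u, j)` of an
adjacent node `u`, bijectively, such that there is a port between `v` and `u`
if and only if they are adjacent. -/
structure IsPortNumbering {V : Type} (G : SimpleGraph V)
    (pn : V → ℕ → Option (V × ℕ)) : Prop where
  dom : ∀ v i, (pn v i).isSome ↔ 1 ≤ i ∧ i ≤ deg G v
  adj : ∀ v i u j, pn v i = some (u, j) → G.Adj v u ∧ 1 ≤ j ∧ j ≤ deg G u
  bij : ∀ u j, 1 ≤ j → j ≤ deg G u → ∃! vi : V × ℕ, pn vi.1 vi.2 = some (u, j)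
  edge : ∀ v u, G.Adj v u ↔ ∃ i j, pn v i = some (u, j)

/-- A generalised port numbering with port numbers from an arbitrary set `N`:
each node `v` has a set of `deg v` output port numbers (those `o` with
`pn v o ≠ none`) and a set of `deg v` input port numbers (those `i` received
from some output port), and `pn` is a bijection from output ports to input
ports of adjacent nodes. -/
structure IsGenPortNumbering {V N : Type} (G : SimpleGraph V)
    (pn : V → N → Option (V × N)) : Prop where
  adj : ∀ v o u i, pn v o = some (u, i) → G.Adj v u
  edge : ∀ v u, G.Adj v u → ∃ o i, pn v o = some (u, i)
  inj : ∀ v o v' o' u i, pn v o = some (u, i) → pn v' o' = some (u, i) →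
    v = v' ∧ o = o'
  out_card : ∀ v, {o | (pn v o).isSome}.ncard = deg G v
  in_card : ∀ u, {i | ∃ v o, pn v o = some (u, i)}.ncard = deg G u

/-- `r`-SV-bisimilarity of `(G, f, v, p)` and `(G', f', v', p')`. -/
def SVBisim {V V' X N : Type} (G : SimpleGraph V) (G' : SimpleGraph V')
    (f : V → X) (f' : V' → X)
    (p : V → N → Option (V × N)) (p' : V' → N → Option (V' × N)) :
    ℕ → V → V' → Prop
  | 0, v, v' => deg G v = deg G' v' ∧ f v = f' v'
  | r + 1, v, v' =>
      (deg G v = deg G' v' ∧ f v = f' v') ∧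
      (∀ w, G.Adj v w → ∃ w', G'.Adj v' w' ∧
        SVBisim G G' f f' p p' r w w' ∧
        ∃ a b c, p w a = some (v, b) ∧ p' w' a = some (v', c)) ∧
      (∀ w', G'.Adj v' w' → ∃ w, G.Adj v w ∧
        SVBisim G G' f f' p p' r w w' ∧
        ∃ a b c, p w a = some (v, b) ∧ p' w' a = some (v', c))

/-- Nodes of the tree `G_d` are finite sequences of pairs of numbers.
We represent a sequence `(a₁, …, a_i)` as the list `[a_i, …, a₁]`, i.e. in
reverse order, so that consing corresponds to appending a pair at the end. -/
abbrev Nd : Type := ℕ × ℕ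

/-- `b₂⁺`: `1` if `b₂ = 0`, and `b₂` otherwise. -/
def bplus (b : ℕ) : ℕ := if b = 0 then 1 else b

/-- For `j ≥ 1`, the `j`-th smallest element of `{lo, lo+1, lo+2, …} \ {f}`.
This realises the greedy choices `c^j = min({lo,…} \ {f, c¹, …, c^{j-1}})`. -/
def nthAvoid (lo f j : ℕ) : ℕ :=
  if lo + j - 1 < f ∨ f < lo then lo + j - 1 else lo + j

/-- The node set `V_d` of the graph `G_d`, given by the rules (G1)–(G4).
(Sequences are represented as reversed lists, the head being the last pair
`a_i` of the sequence.) -/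
inductive Vd (d : ℕ) : List Nd → Prop
  /-- (G1): the empty sequence is a node. -/
  | nil : Vd d []
  /-- (G2): the sequences `((1,0)), ((2,1)), …, ((d,d−1))` are nodes. -/
  | base (k : ℕ) (h1 : 1 ≤ k) (h2 : k ≤ d) : Vd d [(k, k - 1)]
  /-- (G3): children of a node of odd length `< 2d` with last pair `(b₁, b₂)`:
  for `j = 1, …, d−1` append `(c₁ʲ, c₂ʲ)` where `c₁ʲ` is the `j`-th smallest
  element of `{1,…,d} \ {b₂⁺}` and `c₂ʲ` the `j`-th smallest of `{1,…,d} \ {b₁}`. -/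
  | odd (b₁ b₂ : ℕ) (rest : List Nd)
      (hv : Vd d ((b₁, b₂) :: rest))
      (hodd : Odd ((b₁, b₂) :: rest).length)
      (hlt : ((b₁, b₂) :: rest).length < 2 * d)
      (j : ℕ) (hj1 : 1 ≤ j) (hj2 : j ≤ d - 1) :
      Vd d ((nthAvoid 1 (bplus b₂) j, nthAvoid 1 b₁ j) :: (b₁, b₂) :: rest)
  /-- (G4): children of a node of even positive length `< 2d` with last pair
  `(b₁, b₂)`: for `j = 1, …, d−1` append `(c₁ʲ, c₂ʲ)` where `c₁ʲ` is the `j`-th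
  smallest element of `{1,…,d} \ {b₂}` and `c₂ʲ` the `j`-th smallest of
  `{0,…,d−1} \ {b₁}`. -/
  | even (b₁ b₂ : ℕ) (rest : List Nd)
      (hv : Vd d ((b₁, b₂) :: rest))
      (heven : Even ((b₁, b₂) :: rest).length)
      (hlt : ((b₁, b₂) :: rest).length < 2 * d)
      (j : ℕ) (hj1 : 1 ≤ j) (hj2 : j ≤ d - 1) :
      Vd d ((nthAvoid 1 b₂ j, nthAvoid 0 b₁ j) :: (b₁, b₂) :: rest)

/-- The edge relation of `G_d`: `u` is a child of `v` or vice versa. -/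
def Ed (d : ℕ) (v u : List Nd) : Prop :=
  Vd d v ∧ Vd d u ∧ ∃ a : Nd, u = a :: v ∨ v = a :: u

/-- The outgoing port number `π_d(v, u)` from `v` towards an adjacent node `u`:
if `u = (b₁, b₂) :: v` is a child of `v` then `b₁`, and if `v = (b₁, b₂) :: u`
is a child of `u` then `b₂`. -/
def outPort (v u : List Nd) : ℕ :=
  if u.length = v.length + 1 then u.headI.1 else v.headI.2

/-- A pair of compatible walks (PCW) of length `k` in `G_d`:
two walks starting at `((1,0))` and `((2,1))` such that the outgoing port
numbers backwards along the walks coincide. -/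
structure IsPCW (d k : ℕ) (w₁ w₂ : ℕ → List Nd) : Prop where
  klen : k ≤ 2 * d - 3
  walk₁ : ∀ j < k, Ed d (w₁ j) (w₁ (j + 1))
  walk₂ : ∀ j < k, Ed d (w₂ j) (w₂ (j + 1))
  start₁ : w₁ 0 = [(1, 0)]
  start₂ : w₂ 0 = [(2, 1)]
  compat : ∀ j, 1 ≤ j → j ≤ k →
    outPort (w₁ j) (w₁ (j - 1)) = outPort (w₂ j) (w₂ (j - 1))

/-- A pair of separating walks (PSW): a PCW such that the last node of the
first walk has a neighbour whose outgoing port number towards it is matched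
by no neighbour of the last node of the second walk. -/
structure IsPSW (d k : ℕ) (w₁ w₂ : ℕ → List Nd)
    extends IsPCW d k w₁ w₂ : Prop where
  sep : ∃ x, Ed d (w₁ k) x ∧
    ∀ y, Ed d (w₂ k) y → outPort x (w₁ k) ≠ outPort y (w₂ k)

/-- A PSW of length `k` in `G_d` is critical if there is no strictly shorter
PSW in `G_d`. -/
def IsCriticalPSW (d k : ℕ) (w₁ w₂ : ℕ → List Nd) : Prop :=
  IsPSW d k w₁ w₂ ∧ ∀ k' w₁' w₂', IsPSW d k' w₁' w₂' → k ≤ k'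

/-- The three colours: black, white, grey. -/
inductive Col : Type
  | B | W | G
deriving DecidableEq

/-- The complementary colour: `B̄ = W`, `W̄ = B` (grey is left untouched). -/
def Col.flip : Col → Col
  | Col.B => Col.W
  | Col.W => Col.B
  | Col.G => Col.G


/-- Nodes of the trees `H_{C,d}` are finite sequences of triples
(number, number, colour), represented as reversed lists. -/
abbrev Nd3 : Type := ℕ × ℕ × Col

/-- The colouring `f_C`: the root gets grey, any other node the colour
component of its last triple. -/
def fH : List Nd3 → Col
  | [] => Col.G
  | (_, _, c) :: _ => c

/-- The node set `V_{C,d}` of the graph `H_{C,d}`, given by rules (H1)–(H6). -/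
inductive VH (C : Col) (d : ℕ) : List Nd3 → Prop
  /-- (H1): the empty sequence is a node. -/
  | nil : VH C d []
  /-- (H2): the sequences `((1,0,C)), ((2,1,C)), …, ((d,d−1,C))`. -/
  | base (k : ℕ) (h1 : 1 ≤ k) (h2 : k ≤ d) : VH C d [(k, k - 1, C)]
  /-- (H3): the sequences `((2,1,C̄)), …, ((d,d−1,C̄))`. -/
  | base' (k : ℕ) (h1 : 2 ≤ k) (h2 : k ≤ d) : VH C d [(k, k - 1, Col.flip C)]
  /-- (H4): grey children of a node of odd length `< 2d` with last triple
  `(b₁, b₂, c)`, `c ∈ {B, W}`. -/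
  | odd (b₁ b₂ : ℕ) (c : Col) (rest : List Nd3)
      (hc : c ≠ Col.G)
      (hv : VH C d ((b₁, b₂, c) :: rest))
      (hodd : Odd ((b₁, b₂, c) :: rest).length)
      (hlt : ((b₁, b₂, c) :: rest).length < 2 * d)
      (j : ℕ) (hj1 : 1 ≤ j) (hj2 : j ≤ d - 1) :
      VH C d ((nthAvoid 1 (bplus b₂) j, nthAvoid 1 b₁ j, Col.G) ::
        (b₁, b₂, c) :: rest)
  /-- (H5): children of colour `c` of a grey node of even positive length
  `< 2d` with last triple `(b₁, b₂, G)` and previous triple `(d₁, d₂, c)`,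
  `c ∈ {B, W}`. -/
  | evenSame (b₁ b₂ d₁ d₂ : ℕ) (c : Col) (rest : List Nd3)
      (hc : c ≠ Col.G)
      (hv : VH C d ((b₁, b₂, Col.G) :: (d₁, d₂, c) :: rest))
      (heven : Even ((b₁, b₂, Col.G) :: (d₁, d₂, c) :: rest).length)
      (hlt : ((b₁, b₂, Col.G) :: (d₁, d₂, c) :: rest).length < 2 * d)
      (j : ℕ) (hj1 : 1 ≤ j) (hj2 : j ≤ d - 1) :
      VH C d ((nthAvoid 1 b₂ j, nthAvoid 0 b₁ j, c) ::
        (b₁, b₂, Col.G) :: (d₁, d₂, c) :: rest)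
  /-- (H6): children of colour `c̄` of a grey node of even positive length
  `< 2d` with previous triple `(d₁, d₂, c)`, `c ∈ {B, W}`; here
  `c₁ʲ = min({2,…,d} \ {c₁¹,…}) = j + 1` and `c₂ʲ = min({1,…,d−1} \ {c₂¹,…}) = j`. -/
  | evenFlip (b₁ b₂ d₁ d₂ : ℕ) (c : Col) (rest : List Nd3)
      (hc : c ≠ Col.G)
      (hv : VH C d ((b₁, b₂, Col.G) :: (d₁, d₂, c) :: rest))
      (heven : Even ((b₁, b₂, Col.G) :: (d₁, d₂, c) :: rest).length)
      (hlt : ((b₁, b₂, Col.G) :: (d₁, d₂, c) :: rest).length < 2 * d)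
      (j : ℕ) (hj1 : 1 ≤ j) (hj2 : j ≤ d - 1) :
      VH C d ((j + 1, j, Col.flip c) ::
        (b₁, b₂, Col.G) :: (d₁, d₂, c) :: rest)

/-- The edge relation of `H_{C,d}`. -/
def EH (C : Col) (d : ℕ) (v u : List Nd3) : Prop :=
  VH C d v ∧ VH C d u ∧ ∃ a : Nd3, u = a :: v ∨ v = a :: u

/-- The graph `H_{C,d}` as a simple graph on all lists of triples. -/
def HGraph (C : Col) (d : ℕ) : SimpleGraph (List Nd3) where
  Adj v u := EH C d v u
  symm := by
    constructor
    rintro v u ⟨hv, hu, a, h⟩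
    exact ⟨hu, hv, a, h.symm⟩
  loopless := by
    constructor
    rintro v ⟨-, -, a, h | h⟩ <;>
      exact absurd (congrArg List.length h) (by simp)

/-- Membership in the induced subgraph `Ĥ_{C,d}`: every prefix of the
sequence (i.e. every suffix of the reversed list) is grey or of colour `C`. -/
def inHat (C : Col) (v : List Nd3) : Prop :=
  ∀ s : List Nd3, s <:+ v → (fH s = C ∨ fH s = Col.G)

/-- The induced subgraph `Ĥ_{C,d}` of `H_{C,d}`. -/
def HhatGraph (C : Col) (d : ℕ) : SimpleGraph (List Nd3) where
  Adj v u := EH C d v u ∧ inHat C v ∧ inHat C u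
  symm := by
    constructor
    rintro v u ⟨⟨hv, hu, a, h⟩, h1, h2⟩
    exact ⟨⟨hu, hv, a, h.symm⟩, h2, h1⟩
  loopless := by
    constructor
    rintro v ⟨⟨-, -, a, h | h⟩, -, -⟩ <;>
      exact absurd (congrArg List.length h) (by simp)

open Classical in
/-- The generalised port numbering `p_C` of `H_{C,d}`, with port numbers that
are pairs (number, colour): along the edge between a node and its child, each
of the two outgoing port labels consists of the corresponding number of the
child's last triple together with the colour of the node at the other end. -/
noncomputable def pH (C : Col) (d : ℕ) (v : List Nd3) (q : ℕ × Col) :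
    Option (List Nd3 × (ℕ × Col)) :=
  if h : ∃ c₂ : ℕ, VH C d ((q.1, c₂, q.2) :: v) then
    some ((q.1, h.choose, q.2) :: v, (h.choose, fH v))
  else
    match v with
    | (b₁, b₂, cv) :: w =>
        if q = (b₂, fH w) ∧ VH C d ((b₁, b₂, cv) :: w) then
          some (w, (b₁, cv))
        else none
    | [] => none

open Classical in
/-- The restriction of the generalised port numbering `p_C` to the induced
subgraph `Ĥ_{C,d}`. -/
noncomputable def pHhat (C : Col) (d : ℕ) (v : List Nd3) (q : ℕ × Col) :
    Option (List Nd3 × (ℕ × Col)) :=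
  match pH C d v q with
  | some (u, a) => if inHat C v ∧ inHat C u then some (u, a) else none
  | none => none

/-- The isomorphism `g_C` from `Ĥ_{C,d}` to `G_d`: forget the colours. -/
def gC (v : List Nd3) : List Nd := v.map (fun t => (t.1, t.2.1))

section Aux

variable {C : Col} {d : ℕ}

instance : Inhabited Col := ⟨Col.G⟩

instance : Fintype Col :=
  ⟨{Col.B, Col.W, Col.G}, by intro c; cases c <;> simp⟩

lemma Col.flip_ne (hC : C ≠ Col.G) : Col.flip C ≠ C := by
  cases C <;> simp [Col.flip] at hC ⊢

lemma Col.flip_ne_G (hC : C ≠ Col.G) : Col.flip C ≠ Col.G := by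
  cases C <;> simp [Col.flip] at hC ⊢

lemma Col.trichotomy (hC : C ≠ Col.G) (c : Col) :
    c = C ∨ c = Col.G ∨ c = Col.flip C := by
  cases C <;> cases c <;> simp [Col.flip] at hC ⊢

lemma nthAvoid_ne {lo f j : ℕ} (hj : 1 ≤ j) : nthAvoid lo f j ≠ f := by
  unfold nthAvoid; split_ifs with h <;> omega

lemma nthAvoid_inj {lo f j j' : ℕ} (hj : 1 ≤ j) (hj' : 1 ≤ j')
    (h : nthAvoid lo f j = nthAvoid lo f j') : j = j' := by
  unfold nthAvoid at h; split_ifs at h <;> omega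

lemma nthAvoid_le {lo f j : ℕ} : nthAvoid lo f j ≤ lo + j := by
  unfold nthAvoid; split_ifs <;> omega

lemma fH_cons (a : Nd3) (v : List Nd3) : fH (a :: v) = a.2.2 := by
  rcases a with ⟨x, y, c⟩; rfl

/-- Inversion for children in `VH`. -/
lemma VH_child_inv {a : Nd3} {v : List Nd3} (h : VH C d (a :: v)) :
    (v = [] ∧ ∃ k, 1 ≤ k ∧ k ≤ d ∧ (a = (k, k - 1, C) ∨
        (2 ≤ k ∧ a = (k, k - 1, Col.flip C)))) ∨
    (∃ b₁ b₂ c rest, v = (b₁, b₂, c) :: rest ∧ c ≠ Col.G ∧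
        Odd v.length ∧ v.length < 2 * d ∧ VH C d v ∧
        ∃ j, 1 ≤ j ∧ j ≤ d - 1 ∧
          a = (nthAvoid 1 (bplus b₂) j, nthAvoid 1 b₁ j, Col.G)) ∨
    (∃ b₁ b₂ d₁ d₂ c rest, v = (b₁, b₂, Col.G) :: (d₁, d₂, c) :: rest ∧
        c ≠ Col.G ∧ Even v.length ∧ v.length < 2 * d ∧ VH C d v ∧
        ∃ j, 1 ≤ j ∧ j ≤ d - 1 ∧
          (a = (nthAvoid 1 b₂ j, nthAvoid 0 b₁ j, c) ∨
           a = (j + 1, j, Col.flip c))) := by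
  cases h with
  | base k h1 h2 => exact Or.inl ⟨rfl, k, h1, h2, Or.inl rfl⟩
  | base' k h1 h2 => exact Or.inl ⟨rfl, k, by omega, h2, Or.inr ⟨h1, rfl⟩⟩
  | odd b₁ b₂ c rest hc hv hodd hlt j hj1 hj2 =>
      exact Or.inr (Or.inl ⟨b₁, b₂, c, rest, rfl, hc, hodd, hlt, hv,
        j, hj1, hj2, rfl⟩)
  | evenSame b₁ b₂ d₁ d₂ c rest hc hv he hlt j hj1 hj2 =>
      exact Or.inr (Or.inr ⟨b₁, b₂, d₁, d₂, c, rest, rfl, hc, he, hlt, hv,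
        j, hj1, hj2, Or.inl rfl⟩)
  | evenFlip b₁ b₂ d₁ d₂ c rest hc hv he hlt j hj1 hj2 =>
      exact Or.inr (Or.inr ⟨b₁, b₂, d₁, d₂, c, rest, rfl, hc, he, hlt, hv,
        j, hj1, hj2, Or.inr rfl⟩)

lemma VH_tail {a : Nd3} {v : List Nd3} (h : VH C d (a :: v)) : VH C d v := by
  rcases VH_child_inv h with ⟨rfl, -⟩ | ⟨_, _, _, _, rfl, -, -, -, hv, -⟩ |
    ⟨_, _, _, _, _, _, rfl, -, -, -, hv, -⟩
  · exact VH.nil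
  · exact hv
  · exact hv

lemma VH_len {v : List Nd3} (h : VH C d v) : v.length ≤ 2 * d := by
  induction h with
  | nil => simp
  | base k h1 h2 => simp; omega
  | base' k h1 h2 => simp; omega
  | odd b₁ b₂ c rest hc hv hodd hlt j hj1 hj2 ih => simpa using hlt
  | evenSame b₁ b₂ d₁ d₂ c rest hc hv he hlt j hj1 hj2 ih => simpa using hlt
  | evenFlip b₁ b₂ d₁ d₂ c rest hc hv he hlt j hj1 hj2 ih => simpa using hlt

lemma VH_grey_iff (hC : C ≠ Col.G) {v : List Nd3} (h : VH C d v) :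
    (fH v = Col.G ↔ Even v.length) := by
  induction h with
  | nil => simp [fH]
  | base k h1 h2 => simpa [fH] using hC
  | base' k h1 h2 => simpa [fH] using Col.flip_ne_G hC
  | odd b₁ b₂ c rest hc hv hodd hlt j hj1 hj2 ih =>
      simp only [fH, List.length_cons] at hodd ⊢
      rw [Nat.even_iff]; rw [Nat.odd_iff] at hodd
      exact ⟨fun _ => by omega, fun _ => trivial⟩
  | evenSame b₁ b₂ d₁ d₂ c rest hc hv he hlt j hj1 hj2 ih =>
      simp only [fH, List.length_cons] at he ⊢
      constructor
      · intro h; exact absurd h hc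
      · intro h; exact absurd he (by simpa [Nat.even_add_one] using h)
  | evenFlip b₁ b₂ d₁ d₂ c rest hc hv he hlt j hj1 hj2 ih =>
      simp only [fH, List.length_cons] at he ⊢
      constructor
      · intro h; exact absurd h (Col.flip_ne_G (by
          intro hcg; exact hc hcg))
      · intro h; exact absurd he (by simpa [Nat.even_add_one] using h)

lemma VH_grey_shape (hC : C ≠ Col.G) {v : List Nd3} (h : VH C d v)
    (hg : fH v = Col.G) (hne : v ≠ []) :
    ∃ b₁ b₂ d₁ d₂ c rest, v = (b₁, b₂, Col.G) :: (d₁, d₂, c) :: rest ∧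
      c ≠ Col.G := by
  cases h with
  | nil => exact absurd rfl hne
  | base k h1 h2 => exact absurd hg (by simpa [fH] using hC)
  | base' k h1 h2 => exact absurd hg (by simpa [fH] using Col.flip_ne_G hC)
  | odd b₁ b₂ c rest hc hv hodd hlt j hj1 hj2 =>
      exact ⟨_, _, b₁, b₂, c, rest, rfl, hc⟩
  | evenSame b₁ b₂ d₁ d₂ c rest hc hv he hlt j hj1 hj2 =>
      exact absurd hg (by simpa [fH] using hc)
  | evenFlip b₁ b₂ d₁ d₂ c rest hc hv he hlt j hj1 hj2 =>
      exact absurd hg (by simpa [fH] using Col.flip_ne_G hc)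

lemma inHat_cons {a : Nd3} {v : List Nd3} :
    inHat C (a :: v) ↔ (a.2.2 = C ∨ a.2.2 = Col.G) ∧ inHat C v := by
  constructor
  · intro h
    refine ⟨by simpa [fH_cons] using h (a :: v) (List.suffix_refl _), ?_⟩
    intro s hs; exact h s (hs.trans (List.suffix_cons a v))
  · rintro ⟨hcol, hv⟩ s hs
    rcases List.suffix_cons_iff.mp hs with rfl | hs
    · simpa [fH_cons] using hcol
    · exact hv s hs

lemma inHat_tail {v : List Nd3} (h : inHat C v) : inHat C v.tail :=
  fun s hs => h s (hs.trans (List.tail_suffix v))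

lemma nthAvoid_ge {lo f j : ℕ} (hj : 1 ≤ j) : lo ≤ nthAvoid lo f j := by
  unfold nthAvoid; split_ifs <;> omega

lemma bplus_clash {x₂ j : ℕ} (hj : 1 ≤ j)
    (h : x₂ = nthAvoid 1 (bplus x₂) j) : False := by
  unfold nthAvoid bplus at h; split_ifs at h <;> omega

/-- Uniqueness of a child given its first component and colour. -/
lemma VH_unique_child (hC : C ≠ Col.G) {q₁ c₂ c₂' : ℕ} {qc : Col}
    {v : List Nd3} (h : VH C d ((q₁, c₂, qc) :: v))
    (h' : VH C d ((q₁, c₂', qc) :: v)) : c₂ = c₂' := by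
  rcases VH_child_inv h with ⟨hv0, k, hk1, hk2, hk⟩ |
      ⟨b₁, b₂, c, rest, hv0, hc, ho, hl, hvv, j, hj1, hj2, ha⟩ |
      ⟨b₁, b₂, d₁, d₂, c, rest, hv0, hc, he, hl, hvv, j, hj1, hj2, ha⟩ <;>
    rcases VH_child_inv h' with ⟨hv0', k', hk1', hk2', hk'⟩ |
      ⟨b₁', b₂', c', rest', hv0', hc', ho', hl', hvv', j', hj1', hj2', ha'⟩ |
      ⟨b₁', b₂', d₁', d₂', c', rest', hv0', hc', he', hl', hvv', j', hj1', hj2', ha'⟩ <;>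
    subst hv0
  · -- root × root
    rcases hk with hk | ⟨h2k, hk⟩ <;> rcases hk' with hk' | ⟨h2k', hk'⟩ <;>
      simp only [Prod.mk.injEq] at hk hk' <;>
      obtain ⟨e1, e2, e3⟩ := hk <;> obtain ⟨e1', e2', e3'⟩ := hk'
    · omega
    · exact absurd (e3'.symm.trans e3) (Col.flip_ne hC)
    · exact absurd (e3.symm.trans e3') (Col.flip_ne hC)
    · omega
  · exact absurd hv0' (by simp)
  · exact absurd hv0' (by simp)
  · exact absurd hv0' (by simp)
  · -- odd × odd
    simp only [List.cons.injEq, Prod.mk.injEq] at hv0' ha ha'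
    obtain ⟨⟨f1, f2, f3⟩, f4⟩ := hv0'
    obtain ⟨e1, e2, e3⟩ := ha
    obtain ⟨e1', e2', e3'⟩ := ha'
    subst f1; subst f2
    have : j = j' := nthAvoid_inj hj1 hj1' (e1.symm.trans e1')
    subst this; omega
  · -- odd × even: colour clash
    simp only [List.cons.injEq, Prod.mk.injEq] at hv0'
    exact absurd hv0'.1.2.2 hc
  · exact absurd hv0' (by simp)
  · -- even × odd
    simp only [List.cons.injEq, Prod.mk.injEq] at hv0'
    exact absurd hv0'.1.2.2.symm hc'
  · -- even × even
    simp only [List.cons.injEq, Prod.mk.injEq] at hv0' ha ha'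
    obtain ⟨⟨f1, f2, -⟩, ⟨g1, g2, g3⟩, f4⟩ := hv0'
    subst f1; subst f2; subst g1; subst g2; subst g3
    rcases ha with ⟨e1, e2, e3⟩ | ⟨e1, e2, e3⟩ <;>
      rcases ha' with ⟨e1', e2', e3'⟩ | ⟨e1', e2', e3'⟩
    · have : j = j' := nthAvoid_inj hj1 hj1' (e1.symm.trans e1')
      subst this; omega
    · exact absurd (e3.symm.trans e3').symm (Col.flip_ne hc)
    · exact absurd (e3'.symm.trans e3).symm (Col.flip_ne hc)
    · omega

/-- No child of `(x₁,x₂,γ) :: v` has first component `x₂` and the colour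
of `v`; hence the port towards the parent is well defined. -/
lemma VH_noClash (hC : C ≠ Col.G) {x₁ x₂ : ℕ} {γ : Col} {v : List Nd3}
    (h : VH C d ((x₁, x₂, γ) :: v)) :
    ¬ ∃ c₂, VH C d ((x₂, c₂, fH v) :: (x₁, x₂, γ) :: v) := by
  rintro ⟨c₂, hch⟩
  rcases VH_child_inv hch with ⟨heq, -⟩ |
      ⟨b₁, b₂, c, rest, heq, hc, -, -, -, j, hj1, hj2, ha⟩ |
      ⟨b₁, b₂, d₁, d₂, c, rest, heq, hc, -, -, -, j, hj1, hj2, ha⟩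
  · exact absurd heq (by simp)
  · simp only [List.cons.injEq, Prod.mk.injEq] at heq ha
    obtain ⟨⟨g1, g2, g3⟩, g4⟩ := heq
    obtain ⟨e1, e2, e3⟩ := ha
    subst g2
    exact bplus_clash hj1 e1
  · simp only [List.cons.injEq, Prod.mk.injEq] at heq ha
    obtain ⟨⟨g1, g2, g3⟩, g4⟩ := heq
    subst g2; subst g4
    have hfv : fH ((d₁, d₂, c) :: rest) = c := rfl
    rcases ha with ⟨e1, e2, e3⟩ | ⟨e1, e2, e3⟩
    · exact nthAvoid_ne hj1 e1.symm
    · rw [hfv] at e3; exact (Col.flip_ne hc) e3.symm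

lemma pH_parent (hC : C ≠ Col.G) {x₁ x₂ : ℕ} {γ : Col} {v : List Nd3}
    (h : VH C d ((x₁, x₂, γ) :: v)) :
    pH C d ((x₁, x₂, γ) :: v) (x₂, fH v) = some (v, (x₁, γ)) := by
  unfold pH
  rw [dif_neg (VH_noClash hC h)]
  simp [h]

lemma pH_child (hC : C ≠ Col.G) {x₁ x₂ : ℕ} {γ : Col} {v : List Nd3}
    (h : VH C d ((x₁, x₂, γ) :: v)) :
    pH C d v (x₁, γ) = some ((x₁, x₂, γ) :: v, (x₂, fH v)) := by
  unfold pH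
  have hex : ∃ c₂, VH C d ((x₁, c₂, γ) :: v) := ⟨x₂, h⟩
  rw [dif_pos hex]
  have := VH_unique_child hC hex.choose_spec h
  rw [this]

open Classical in
lemma pHhat_le {v u : List Nd3} {q a : ℕ × Col}
    (h : pHhat C d v q = some (u, a)) : pH C d v q = some (u, a) := by
  unfold pHhat at h
  rcases he : pH C d v q with - | ⟨w, b⟩ <;> rw [he] at h
  · exact absurd (h : (none : Option (List Nd3 × (ℕ × Col))) = some (u, a))
      (by simp)
  · change (if inHat C v ∧ inHat C w then some (w, b) else none) =
        some (u, a) at h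
    by_cases hcond : inHat C v ∧ inHat C w
    · rw [if_pos hcond] at h; exact h
    · rw [if_neg hcond] at h; exact absurd h (by simp)

lemma VH_child_le {a : Nd3} {v : List Nd3} (h : VH C d (a :: v)) :
    a.1 ≤ d ∧ a.2.1 ≤ d := by
  rcases VH_child_inv h with ⟨-, k, hk1, hk2, hk | ⟨-, hk⟩⟩ |
      ⟨b₁, b₂, c, rest, -, -, -, -, -, j, hj1, hj2, ha⟩ |
      ⟨b₁, b₂, d₁, d₂, c, rest, -, -, -, -, -, j, hj1, hj2, ha | ha⟩ <;>
    subst_vars <;> simp only <;> constructor <;>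
    first
    | omega
    | (have := nthAvoid_le (lo := 1) (f := bplus b₂) (j := j); omega)
    | (have := nthAvoid_le (lo := 1) (f := b₁) (j := j); omega)
    | (have := nthAvoid_le (lo := 1) (f := b₂) (j := j); omega)
    | (have := nthAvoid_le (lo := 0) (f := b₁) (j := j); omega)

lemma labels_finite (v : List Nd3) : {a : Nd3 | VH C d (a :: v)}.Finite := by
  apply Set.Finite.subset
    (((Set.finite_Iic d).prod ((Set.finite_Iic d).prod
      (Set.finite_univ (α := Col)))))
  rintro a ha
  obtain ⟨h1, h2⟩ := VH_child_le ha
  exact ⟨h1, h2, trivial⟩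

lemma labels_finite' (v : List Nd3) (S : Set Nd3)
    (hS : S ⊆ {a : Nd3 | VH C d (a :: v)}) : S.Finite :=
  (labels_finite v).subset hS

/-- Degree formula for graphs whose neighbourhoods consist of children
given by a label set plus (for non-roots) the parent. -/
lemma deg_formula {G : SimpleGraph (List Nd3)} {v : List Nd3} {S : Set Nd3}
    (h : {w | G.Adj v w} =
      ((fun a => a :: v) '' S) ∪ {w | v ≠ [] ∧ w = v.tail})
    (hS : S.Finite) :
    deg G v = S.ncard + (if v = [] then 0 else 1) := by
  unfold deg
  rw [h]
  by_cases hne : v = []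
  · subst hne
    simp only [ne_eq, not_true_eq_false, false_and, Set.setOf_false,
      Set.union_empty, if_pos rfl]
    rw [Set.ncard_image_of_injective _ (fun a b hab => by
      injection hab)]
    simp
  · have hset : {w | v ≠ [] ∧ w = v.tail} = {v.tail} := by
      ext w; simp [hne]
    rw [hset, if_neg hne]
    have hdisj : Disjoint ((fun a => a :: v) '' S) ({v.tail} : Set (List Nd3)) := by
      rw [Set.disjoint_singleton_right]
      rintro ⟨a, -, ha⟩
      have ha' : a :: v = v.tail := ha
      have h1 : (a :: v).length = v.length + 1 := by simp
      have h2 : v.tail.length + 1 = v.length := by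
        cases v with
        | nil => exact absurd rfl hne
        | cons x xs => simp
      rw [ha'] at h1; omega
    rw [Set.ncard_union_eq hdisj (hS.image _) (Set.finite_singleton _),
      Set.ncard_image_of_injective _ (fun a b hab => by injection hab),
      Set.ncard_singleton]

lemma nbhdH {v : List Nd3} (hv : VH C d v) :
    {w | (HGraph C d).Adj v w} =
      ((fun a => a :: v) '' {a : Nd3 | VH C d (a :: v)}) ∪
      {w | v ≠ [] ∧ w = v.tail} := by
  ext w
  constructor
  · rintro ⟨-, hw, a, rfl | rfl⟩
    · exact Or.inl ⟨a, hw, rfl⟩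
    · exact Or.inr ⟨by simp, rfl⟩
  · rintro (⟨a, ha, rfl⟩ | ⟨hne, rfl⟩)
    · exact ⟨hv, ha, a, Or.inl rfl⟩
    · obtain ⟨a, t, rfl⟩ := List.exists_cons_of_ne_nil hne
      exact ⟨hv, VH_tail hv, a, Or.inr rfl⟩

lemma nbhdHhat {v : List Nd3} (hv : VH C d v) (hhat : inHat C v) :
    {w | (HhatGraph C d).Adj v w} =
      ((fun a => a :: v) ''
        {a : Nd3 | VH C d (a :: v) ∧ (a.2.2 = C ∨ a.2.2 = Col.G)}) ∪
      {w | v ≠ [] ∧ w = v.tail} := by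
  ext w
  constructor
  · rintro ⟨⟨-, hw, a, rfl | rfl⟩, h1, h2⟩
    · exact Or.inl ⟨a, ⟨hw, (inHat_cons.mp h2).1⟩, rfl⟩
    · exact Or.inr ⟨by simp, rfl⟩
  · rintro (⟨a, ⟨ha, hacol⟩, rfl⟩ | ⟨hne, rfl⟩)
    · exact ⟨⟨hv, ha, a, Or.inl rfl⟩, hhat, inHat_cons.mpr ⟨hacol, hhat⟩⟩
    · obtain ⟨a, t, rfl⟩ := List.exists_cons_of_ne_nil hne
      exact ⟨⟨hv, VH_tail hv, a, Or.inr rfl⟩, hhat, inHat_tail hhat⟩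

lemma degH_eq {v : List Nd3} (hv : VH C d v) :
    deg (HGraph C d) v =
      {a : Nd3 | VH C d (a :: v)}.ncard + (if v = [] then 0 else 1) :=
  deg_formula (nbhdH hv) (labels_finite v)

lemma degHhat_eq {v : List Nd3} (hv : VH C d v) (hhat : inHat C v) :
    deg (HhatGraph C d) v =
      {a : Nd3 | VH C d (a :: v) ∧ (a.2.2 = C ∨ a.2.2 = Col.G)}.ncard +
      (if v = [] then 0 else 1) :=
  deg_formula (nbhdHhat hv hhat) (labels_finite' v _ (fun a ha => ha.1))

/-- Characterisation of the flip-coloured children of a node of `Ĥ`. -/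
lemma flipLabel_iff (hC : C ≠ Col.G) {v : List Nd3} (hv : VH C d v)
    (hhat : inHat C v) (hlen : v.length < 2 * d) (a : Nd3) :
    (VH C d (a :: v) ∧ a.2.2 = Col.flip C) ↔
    (fH v = Col.G ∧ ∃ j, 1 ≤ j ∧ j ≤ d - 1 ∧ a = (j + 1, j, Col.flip C)) := by
  constructor
  · rintro ⟨h, hcol⟩
    rcases VH_child_inv h with ⟨hv0, k, hk1, hk2, hk | ⟨h2k, hk⟩⟩ |
        ⟨b₁, b₂, c, rest, hv0, hc, -, -, -, j, hj1, hj2, ha⟩ |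
        ⟨b₁, b₂, d₁, d₂, c, rest, hv0, hc, -, -, -, j, hj1, hj2, ha | ha⟩
    · subst hk; exact absurd hcol (Ne.symm (Col.flip_ne hC))
    · subst hv0; subst hk
      exact ⟨rfl, k - 1, by omega, by omega, by simp; omega⟩
    · subst ha; exact absurd hcol (Ne.symm (Col.flip_ne_G hC))
    · -- same-colour child of a grey node: its colour is C, not flip C
      subst hv0; subst ha
      have hcC : c = C := by
        have := hhat ((d₁, d₂, c) :: rest) (by
          exact (List.suffix_cons (b₁, b₂, Col.G) _))
        simp only [fH] at this
        rcases this with h1 | h1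
        · exact h1
        · exact absurd h1 hc
      rw [hcC] at hcol
      exact absurd hcol (Ne.symm (Col.flip_ne hC))
    · subst hv0; subst ha
      have hcC : c = C := by
        have := hhat ((d₁, d₂, c) :: rest) (List.suffix_cons (b₁, b₂, Col.G) _)
        simp only [fH] at this
        rcases this with h1 | h1
        · exact h1
        · exact absurd h1 hc
      exact ⟨rfl, j, hj1, hj2, by rw [hcC]⟩
  · rintro ⟨hg, j, hj1, hj2, rfl⟩
    refine ⟨?_, rfl⟩
    by_cases hne : v = []
    · subst hne
      have : (j + 1) - 1 = j := by omega
      exact this ▸ VH.base' (j + 1) (by omega) (by omega)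
    · obtain ⟨b₁, b₂, d₁, d₂, c, rest, rfl, hc⟩ := VH_grey_shape hC hv hg hne
      have hcC : c = C := by
        have := hhat ((d₁, d₂, c) :: rest) (List.suffix_cons (b₁, b₂, Col.G) _)
        simp only [fH] at this
        rcases this with h1 | h1
        · exact h1
        · exact absurd h1 hc
      exact hcC ▸ VH.evenFlip b₁ b₂ d₁ d₂ c rest hc hv
        ((VH_grey_iff hC hv).mp hg) hlen j hj1 hj2

/-- The two degrees differ by the number of flip-coloured children. -/
lemma degH_sub (hC : C ≠ Col.G) {v : List Nd3} (hv : VH C d v)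
    (hhat : inHat C v) (hlen : v.length < 2 * d) :
    deg (HGraph C d) v = deg (HhatGraph C d) v +
      (if fH v = Col.G then d - 1 else 0) := by
  rw [degH_eq hv, degHhat_eq hv hhat]
  have hsplit : {a : Nd3 | VH C d (a :: v)} =
      {a : Nd3 | VH C d (a :: v) ∧ (a.2.2 = C ∨ a.2.2 = Col.G)} ∪
      {a : Nd3 | VH C d (a :: v) ∧ a.2.2 = Col.flip C} := by
    ext a
    constructor
    · intro ha
      rcases Col.trichotomy hC a.2.2 with h1 | h1 | h1
      · exact Or.inl ⟨ha, Or.inl h1⟩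
      · exact Or.inl ⟨ha, Or.inr h1⟩
      · exact Or.inr ⟨ha, h1⟩
    · rintro (⟨ha, -⟩ | ⟨ha, -⟩) <;> exact ha
  have hdisj : Disjoint {a : Nd3 | VH C d (a :: v) ∧ (a.2.2 = C ∨ a.2.2 = Col.G)}
      {a : Nd3 | VH C d (a :: v) ∧ a.2.2 = Col.flip C} := by
    rw [Set.disjoint_left]
    rintro a ⟨-, h1 | h1⟩ ⟨-, h2⟩
    · exact Col.flip_ne hC (h2.symm.trans h1)
    · exact Col.flip_ne_G hC (h2.symm.trans h1)
  have hflip : {a : Nd3 | VH C d (a :: v) ∧ a.2.2 = Col.flip C}.ncard =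
      if fH v = Col.G then d - 1 else 0 := by
    by_cases hg : fH v = Col.G
    · rw [if_pos hg]
      have : {a : Nd3 | VH C d (a :: v) ∧ a.2.2 = Col.flip C} =
          (fun j => ((j + 1 : ℕ), (j : ℕ), Col.flip C)) '' Set.Icc 1 (d - 1) := by
        ext a
        rw [Set.mem_setOf_eq, flipLabel_iff hC hv hhat hlen a]
        constructor
        · rintro ⟨-, j, hj1, hj2, rfl⟩; exact ⟨j, ⟨hj1, hj2⟩, rfl⟩
        · rintro ⟨j, ⟨hj1, hj2⟩, rfl⟩; exact ⟨hg, j, hj1, hj2, rfl⟩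
      rw [this, Set.ncard_image_of_injective _ (fun a b hab => by
        have := congrArg (fun x : Nd3 => x.2.1) hab
        simpa using this)]
      rw [show (Set.Icc 1 (d-1) : Set ℕ) = ↑(Finset.Icc 1 (d-1)) by simp,
        Set.ncard_coe_finset, Nat.card_Icc]
      omega
    · rw [if_neg hg]
      have : {a : Nd3 | VH C d (a :: v) ∧ a.2.2 = Col.flip C} = ∅ := by
        ext a
        simp only [Set.mem_setOf_eq, Set.mem_empty_iff_false, iff_false]
        intro ha
        exact hg ((flipLabel_iff hC hv hhat hlen a).mp ha).1
      simp [this]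
  rw [hsplit, Set.ncard_union_eq hdisj
    (labels_finite' v _ (fun a ha => ha.1))
    (labels_finite' v _ (fun a ha => ha.1)), hflip]
  ring

lemma walk_len {v w : List Nd3} (p : (HhatGraph C d).Walk v w) :
    v.length ≤ p.length + w.length := by
  induction p with
  | nil => simp
  | @cons v x _ h q ih =>
      simp only [SimpleGraph.Walk.length_cons]
      obtain ⟨⟨-, -, a, hx | hx⟩, -, -⟩ := h <;>
        have hlx := congrArg List.length hx <;>
        simp only [List.length_cons] at hlx <;> omega

lemma VH_reachable {v : List Nd3} (hv : VH C d v) (hhat : inHat C v) :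
    (HhatGraph C d).Reachable v [] := by
  induction v with
  | nil => exact SimpleGraph.Reachable.refl _
  | cons a t ih =>
      have ht : VH C d t := VH_tail hv
      have hht : inHat C t := inHat_tail hhat
      have hadj : (HhatGraph C d).Adj (a :: t) t :=
        ⟨⟨hv, ht, a, Or.inr rfl⟩, hhat, hht⟩
      exact hadj.reachable.trans (ih ht hht)

lemma length_le_dist {v : List Nd3} (hv : VH C d v) (hhat : inHat C v) :
    v.length ≤ (HhatGraph C d).dist v [] := by
  obtain ⟨p, hp⟩ := (VH_reachable hv hhat).exists_walk_length_eq_dist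
  rw [← hp]
  simpa using walk_len p

/-- Monotonicity of SV-bisimilarity. -/
lemma SVBisim.mono {V V' X N : Type} {G : SimpleGraph V} {G' : SimpleGraph V'}
    {f : V → X} {f' : V' → X} {p : V → N → Option (V × N)}
    {p' : V' → N → Option (V' × N)} :
    ∀ {r : ℕ} {v : V} {v' : V'},
      SVBisim G G' f f' p p' (r + 1) v v' → SVBisim G G' f f' p p' r v v'
  | 0, v, v', h => h.1
  | r + 1, v, v', ⟨h1, h2, h3⟩ => by
      refine ⟨h1, fun w hw => ?_, fun w' hw' => ?_⟩
      · obtain ⟨w', hw', hb, hp⟩ := h2 w hw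
        exact ⟨w', hw', SVBisim.mono hb, hp⟩
      · obtain ⟨w, hw, hb, hp⟩ := h3 w' hw'
        exact ⟨w, hw, SVBisim.mono hb, hp⟩

lemma EH_len {v w : List Nd3} (h : EH C d v w) :
    w.length ≤ v.length + 1 ∧ v.length ≤ w.length + 1 := by
  obtain ⟨-, -, a, rfl | rfl⟩ := h <;> simp <;> omega

/-- Transport a child along nodes with the same local structure. -/
lemma childMap (hC : C ≠ Col.G) {v u : List Nd3} {a : Nd3}
    (hu : VH C d u) (hvne : v ≠ []) (hune : u ≠ [])
    (hhead : v.headI = u.headI)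
    (htail : v.headI.2.2 = Col.G → v.tail.headI.2.2 = u.tail.headI.2.2)
    (hlu : u.length < 2 * d)
    (h : VH C d (a :: v)) : VH C d (a :: u) := by
  rcases VH_child_inv h with ⟨hv0, -⟩ |
      ⟨b₁, b₂, c, rest, hv0, hc, ho, hl, -, j, hj1, hj2, ha⟩ |
      ⟨b₁, b₂, d₁, d₂, c, rest, hv0, hc, he, hl, -, j, hj1, hj2, ha⟩
  · exact absurd hv0 hvne
  · obtain ⟨⟨y₁, y₂, yc⟩, t, rfl⟩ := List.exists_cons_of_ne_nil hune
    subst hv0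
    simp only [List.headI] at hhead
    obtain ⟨e1, e2, e3⟩ : b₁ = y₁ ∧ b₂ = y₂ ∧ c = yc := by
      simpa [Prod.ext_iff] using hhead
    subst e1; subst e2; subst e3
    have hodd : Odd ((b₁, b₂, c) :: t).length := by
      rw [← Nat.not_even_iff_odd]
      intro he
      exact hc ((VH_grey_iff hC hu).mpr he)
    subst ha
    exact VH.odd b₁ b₂ c t hc hu hodd hlu j hj1 hj2
  · subst hv0
    simp only [List.headI] at hhead htail
    have htail' := htail trivial
    have hfu : fH u = Col.G := by
      obtain ⟨x, t, rfl⟩ := List.exists_cons_of_ne_nil hune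
      simp only [List.headI] at hhead
      rw [fH_cons, ← hhead]
    obtain ⟨b₁', b₂', e₁, e₂, c', rest', rfl, hc'⟩ :=
      VH_grey_shape hC hu hfu hune
    simp only [List.headI] at hhead htail'
    obtain ⟨e1, e2, -⟩ : b₁ = b₁' ∧ b₂ = b₂' ∧ Col.G = Col.G := by
      simpa [Prod.ext_iff] using hhead
    subst e1; subst e2
    simp only [List.tail_cons, List.headI] at htail'
    have hcc : c = c' := htail'
    subst hcc
    have heu : Even ((b₁, b₂, Col.G) :: (e₁, e₂, c) :: rest').length :=
      (VH_grey_iff hC hu).mp hfu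
    rcases ha with rfl | rfl
    · exact VH.evenSame b₁ b₂ e₁ e₂ c rest' hc hu heu hlu j hj1 hj2
    · exact VH.evenFlip b₁ b₂ e₁ e₂ c rest' hc hu heu hlu j hj1 hj2

lemma Q_deg (hC : C ≠ Col.G) {pre v u : List Nd3} (hpre : pre ≠ [])
    (hlast : ∀ x, pre.getLast? = some x → x.2.2 ≠ Col.G)
    (hvV : VH C d (pre ++ v)) (hvU : VH C d (pre ++ u))
    (hlV : (pre ++ v).length < 2 * d) (hlU : (pre ++ u).length < 2 * d) :
    deg (HGraph C d) (pre ++ v) = deg (HGraph C d) (pre ++ u) := by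
  obtain ⟨p, pr, rfl⟩ := List.exists_cons_of_ne_nil hpre
  have hVne : (p :: pr) ++ v ≠ [] := by simp
  have hUne : (p :: pr) ++ u ≠ [] := by simp
  have hhead : ((p :: pr) ++ v).headI = ((p :: pr) ++ u).headI := by simp
  have htailVU : ((p :: pr) ++ v).headI.2.2 = Col.G →
      ((p :: pr) ++ v).tail.headI.2.2 = ((p :: pr) ++ u).tail.headI.2.2 := by
    intro hg
    cases pr with
    | nil => exact absurd (by simpa using hg) (hlast p rfl)
    | cons q qr => simp
  have htailUV : ((p :: pr) ++ u).headI.2.2 = Col.G →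
      ((p :: pr) ++ u).tail.headI.2.2 = ((p :: pr) ++ v).tail.headI.2.2 := by
    intro hg
    cases pr with
    | nil => exact absurd (by simpa using hg) (hlast p rfl)
    | cons q qr => simp
  have hset : {a : Nd3 | VH C d (a :: ((p :: pr) ++ v))} =
      {a : Nd3 | VH C d (a :: ((p :: pr) ++ u))} := by
    ext a
    exact ⟨fun ha => childMap hC hvU hVne hUne hhead htailVU hlU ha,
      fun ha => childMap hC hvV hUne hVne hhead.symm htailUV hlV ha⟩
  rw [degH_eq hvV, degH_eq hvU, if_neg hVne, if_neg hUne, hset]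

/-- The combined induction: `P` (nodes of `Ĥ`) and `Q` (nodes hanging below
a flip-coloured child of a node of `Ĥ`). -/
lemma mainPQ (hC : C ≠ Col.G) (hd : 2 ≤ d) : ∀ t : ℕ,
    (∀ v u : List Nd3, VH C d v → VH C d u → inHat C v → inHat C u →
      v.length + t < 2 * d → u.length + t < 2 * d →
      SVBisim (HhatGraph C d) (HhatGraph C d) fH fH (pHhat C d) (pHhat C d)
        t v u →
      SVBisim (HGraph C d) (HGraph C d) fH fH (pH C d) (pH C d) t v u) ∧
    (∀ pre v u : List Nd3, pre ≠ [] →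
      (∀ x, pre.getLast? = some x → x.2.2 ≠ Col.G) →
      VH C d (pre ++ v) → VH C d (pre ++ u) → inHat C v → inHat C u →
      fH v = Col.G → fH u = Col.G →
      pre.length + v.length + t < 2 * d →
      pre.length + u.length + t < 2 * d →
      SVBisim (HhatGraph C d) (HhatGraph C d) fH fH (pHhat C d) (pHhat C d)
        t v u →
      SVBisim (HGraph C d) (HGraph C d) fH fH (pH C d) (pH C d)
        t (pre ++ v) (pre ++ u)) := by
  intro t
  induction t with
  | zero =>
      constructor
      · intro v u hv hu hvhat huhat hlv hlu hbisim
        obtain ⟨hdeg, hcol⟩ := hbisim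
        refine ⟨?_, hcol⟩
        rw [degH_sub hC hv hvhat (by omega), degH_sub hC hu huhat (by omega),
          hdeg, hcol]
      · intro pre v u hpre hlast hvV hvU hvhat huhat hgv hgu hlv hlu hbisim
        refine ⟨Q_deg hC hpre hlast hvV hvU (by simp; omega) (by simp; omega),
          ?_⟩
        obtain ⟨p, pr, rfl⟩ := List.exists_cons_of_ne_nil hpre
        obtain ⟨x₁, x₂, γ⟩ := p
        rfl
  | succ t ih =>
      obtain ⟨ihP, ihQ⟩ := ih
      constructor
      · -- statement P at t + 1
        intro v u hv hu hvhat huhat hlv hlu hbisim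
        obtain ⟨⟨hdeg, hcol⟩, hB2, hB3⟩ := hbisim
        have hlv2 : v.length < 2 * d := by omega
        have hlu2 : u.length < 2 * d := by omega
        refine ⟨⟨by rw [degH_sub hC hv hvhat hlv2, degH_sub hC hu huhat hlu2,
          hdeg, hcol], hcol⟩, ?_, ?_⟩
        · -- forward simulation
          intro w hw
          obtain ⟨-, hwVH, b, hcase⟩ := hw
          rcases hcase with rfl | rfl
          · -- `w` is a child of `v`
            by_cases hkeep : b.2.2 = C ∨ b.2.2 = Col.G
            · -- a child inside `Ĥ`
              have hwhat : inHat C (b :: v) := inHat_cons.mpr ⟨hkeep, hvhat⟩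
              have hadj : (HhatGraph C d).Adj v (b :: v) :=
                ⟨⟨hv, hwVH, b, Or.inl rfl⟩, hvhat, hwhat⟩
              obtain ⟨w', hadj', hbis', a', b', c', hp, hp'⟩ := hB2 _ hadj
              exact ⟨w', hadj'.1, ihP (b :: v) w' hwVH hadj'.1.2.1 hwhat
                hadj'.2.2 (by simp only [List.length_cons]; omega)
                (by have := (EH_len hadj'.1).1; omega) hbis',
                a', b', c', pHhat_le hp, pHhat_le hp'⟩
            · -- a flip-coloured child
              have hbflip : b.2.2 = Col.flip C := by
                rcases Col.trichotomy hC b.2.2 with h1 | h1 | h1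
                · exact absurd (Or.inl h1) hkeep
                · exact absurd (Or.inr h1) hkeep
                · exact h1
              obtain ⟨hgv, j, hj1, hj2, rfl⟩ :=
                (flipLabel_iff hC hv hvhat hlv2 b).mp ⟨hwVH, hbflip⟩
              have hgu : fH u = Col.G := hcol.symm.trans hgv
              have hw' : VH C d ((j + 1, j, Col.flip C) :: u) :=
                ((flipLabel_iff hC hu huhat hlu2 _).mpr
                  ⟨hgu, j, hj1, hj2, rfl⟩).1
              have hQ := ihQ [(j + 1, j, Col.flip C)] v u (by simp)
                (by rintro x hx
                    injection hx with hx
                    rw [← hx]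
                    exact Col.flip_ne_G hC)
                hwVH hw' hvhat huhat hgv hgu
                (by simp only [List.length_cons, List.length_nil]; omega)
                (by simp only [List.length_cons, List.length_nil]; omega)
                (SVBisim.mono ⟨⟨hdeg, hcol⟩, hB2, hB3⟩)
              exact ⟨(j + 1, j, Col.flip C) :: u, ⟨hu, hw', _, Or.inl rfl⟩,
                hQ, (j, fH v), (j + 1, Col.flip C), (j + 1, Col.flip C),
                pH_parent hC hwVH, by rw [hcol]; exact pH_parent hC hw'⟩
          · -- `w` is the parent of `v`
            have hwhat : inHat C w := (inHat_cons.mp hvhat).2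
            have hadj : (HhatGraph C d).Adj (b :: w) w :=
              ⟨⟨hv, hwVH, b, Or.inr rfl⟩, hvhat, hwhat⟩
            obtain ⟨w', hadj', hbis', a', b', c', hp, hp'⟩ := hB2 _ hadj
            exact ⟨w', hadj'.1, ihP w w' hwVH hadj'.1.2.1 hwhat
              hadj'.2.2 (by simp only [List.length_cons] at hlv; omega)
              (by have := (EH_len hadj'.1).1; omega) hbis',
              a', b', c', pHhat_le hp, pHhat_le hp'⟩
        · -- backward simulation
          intro w' hw'
          obtain ⟨-, hw'VH, b, hcase⟩ := hw'
          rcases hcase with rfl | rfl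
          · by_cases hkeep : b.2.2 = C ∨ b.2.2 = Col.G
            · have hw'hat : inHat C (b :: u) := inHat_cons.mpr ⟨hkeep, huhat⟩
              have hadj : (HhatGraph C d).Adj u (b :: u) :=
                ⟨⟨hu, hw'VH, b, Or.inl rfl⟩, huhat, hw'hat⟩
              obtain ⟨w, hadjv, hbis, a', b', c', hp, hp'⟩ := hB3 _ hadj
              exact ⟨w, hadjv.1, ihP w (b :: u) hadjv.1.2.1 hw'VH hadjv.2.2
                hw'hat (by have := (EH_len hadjv.1).1; omega)
                (by simp only [List.length_cons]; omega) hbis,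
                a', b', c', pHhat_le hp, pHhat_le hp'⟩
            · have hbflip : b.2.2 = Col.flip C := by
                rcases Col.trichotomy hC b.2.2 with h1 | h1 | h1
                · exact absurd (Or.inl h1) hkeep
                · exact absurd (Or.inr h1) hkeep
                · exact h1
              obtain ⟨hgu, j, hj1, hj2, rfl⟩ :=
                (flipLabel_iff hC hu huhat hlu2 b).mp ⟨hw'VH, hbflip⟩
              have hgv : fH v = Col.G := hcol.trans hgu
              have hwVH : VH C d ((j + 1, j, Col.flip C) :: v) :=
                ((flipLabel_iff hC hv hvhat hlv2 _).mpr
                  ⟨hgv, j, hj1, hj2, rfl⟩).1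
              have hQ := ihQ [(j + 1, j, Col.flip C)] v u (by simp)
                (by rintro x hx
                    injection hx with hx
                    rw [← hx]
                    exact Col.flip_ne_G hC)
                hwVH hw'VH hvhat huhat hgv hgu
                (by simp only [List.length_cons, List.length_nil]; omega)
                (by simp only [List.length_cons, List.length_nil]; omega)
                (SVBisim.mono ⟨⟨hdeg, hcol⟩, hB2, hB3⟩)
              exact ⟨(j + 1, j, Col.flip C) :: v, ⟨hv, hwVH, _, Or.inl rfl⟩,
                hQ, (j, fH v), (j + 1, Col.flip C), (j + 1, Col.flip C),
                pH_parent hC hwVH, by rw [hcol]; exact pH_parent hC hw'VH⟩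
          · have hw'hat : inHat C w' := (inHat_cons.mp huhat).2
            have hadj : (HhatGraph C d).Adj (b :: w') w' :=
              ⟨⟨hu, hw'VH, b, Or.inr rfl⟩, huhat, hw'hat⟩
            obtain ⟨w, hadjv, hbis, a', b', c', hp, hp'⟩ := hB3 _ hadj
            exact ⟨w, hadjv.1, ihP w w' hadjv.1.2.1 hw'VH hadjv.2.2 hw'hat
              (by have := (EH_len hadjv.1).1; omega)
              (by simp only [List.length_cons] at hlu; omega) hbis,
              a', b', c', pHhat_le hp, pHhat_le hp'⟩
      · -- statement Q at t + 1
        intro pre v u hpre hlast hvV hvU hvhat huhat hgv hgu hlv hlu hbisim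
        obtain ⟨p, pr, rfl⟩ := List.exists_cons_of_ne_nil hpre
        simp only [List.length_cons] at hlv hlu
        have hlV2 : ((p :: pr) ++ v).length < 2 * d := by simp; omega
        have hlU2 : ((p :: pr) ++ u).length < 2 * d := by simp; omega
        have hcolVU : fH ((p :: pr) ++ v) = fH ((p :: pr) ++ u) := by
          obtain ⟨x₁, x₂, γ⟩ := p; rfl
        have hheadVU : ((p :: pr) ++ v).headI = ((p :: pr) ++ u).headI := by
          simp
        have htailVU : ((p :: pr) ++ v).headI.2.2 = Col.G →
            ((p :: pr) ++ v).tail.headI.2.2 =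
            ((p :: pr) ++ u).tail.headI.2.2 := by
          intro hg
          cases pr with
          | nil => exact absurd (by simpa using hg) (hlast p rfl)
          | cons q qr => simp
        have htailUV : ((p :: pr) ++ u).headI.2.2 = Col.G →
            ((p :: pr) ++ u).tail.headI.2.2 =
            ((p :: pr) ++ v).tail.headI.2.2 := by
          intro hg
          cases pr with
          | nil => exact absurd (by simpa using hg) (hlast p rfl)
          | cons q qr => simp
        have hlast' : ∀ x : Nd3, ∀ b : Nd3,
            (b :: p :: pr).getLast? = some x → x.2.2 ≠ Col.G := by
          intro x b hx
          rw [List.getLast?_cons_cons] at hx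
          exact hlast x hx
        refine ⟨⟨Q_deg hC hpre hlast hvV hvU hlV2 hlU2, hcolVU⟩, ?_, ?_⟩
        · -- forward simulation
          intro w hw
          obtain ⟨-, hwVH, b, hcase⟩ := hw
          rcases hcase with rfl | hVeq
          · -- a child of `pre ++ v`
            have hw'VH : VH C d (b :: ((p :: pr) ++ u)) :=
              childMap hC hvU (by simp) (by simp) hheadVU htailVU hlU2 hwVH
            have hQ := ihQ (b :: p :: pr) v u (by simp) (hlast' · b)
              hwVH hw'VH hvhat huhat hgv hgu
              (by simp only [List.length_cons]; omega)
              (by simp only [List.length_cons]; omega)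
              (SVBisim.mono hbisim)
            obtain ⟨y₁, y₂, δ⟩ := b
            exact ⟨(y₁, y₂, δ) :: ((p :: pr) ++ u),
              ⟨hvU, hw'VH, _, Or.inl rfl⟩, hQ,
              (y₂, fH ((p :: pr) ++ v)), (y₁, δ), (y₁, δ),
              pH_parent hC hwVH,
              by rw [hcolVU]; exact pH_parent hC hw'VH⟩
          · -- the parent of `pre ++ v`
            rw [List.cons_append] at hVeq
            injection hVeq with e1 e2
            subst e1; subst e2
            cases pr with
            | nil =>
                obtain ⟨x₁, x₂, γ⟩ := p
                exact ⟨u, ⟨hvU, VH_tail hvU, (x₁, x₂, γ), Or.inr rfl⟩,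
                  ihP v u (VH_tail hvV) (VH_tail hvU) hvhat huhat
                    (by simp only [List.length_nil] at hlv; omega)
                    (by simp only [List.length_nil] at hlu; omega)
                    (SVBisim.mono hbisim),
                  (x₁, γ), (x₂, fH v), (x₂, fH u),
                  pH_child hC hvV, pH_child hC hvU⟩
            | cons q qr =>
                obtain ⟨x₁, x₂, γ⟩ := p
                exact ⟨(q :: qr) ++ u,
                  ⟨hvU, VH_tail hvU, (x₁, x₂, γ), Or.inr rfl⟩,
                  ihQ (q :: qr) v u (by simp)
                    (fun x hx => hlast x (by
                      rw [List.getLast?_cons_cons]; exact hx))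
                    (VH_tail hvV) (VH_tail hvU) hvhat huhat hgv hgu
                    (by simp only [List.length_cons] at hlv ⊢; omega)
                    (by simp only [List.length_cons] at hlu ⊢; omega)
                    (SVBisim.mono hbisim),
                  (x₁, γ), (x₂, fH ((q :: qr) ++ v)), (x₂, fH ((q :: qr) ++ u)),
                  pH_child hC hvV, pH_child hC hvU⟩
        · -- backward simulation
          intro w' hw'
          obtain ⟨-, hw'VH, b, hcase⟩ := hw'
          rcases hcase with rfl | hUeq
          · have hwVH : VH C d (b :: ((p :: pr) ++ v)) :=
              childMap hC hvV (by simp) (by simp) hheadVU.symm htailUV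
                hlV2 hw'VH
            have hQ := ihQ (b :: p :: pr) v u (by simp) (hlast' · b)
              hwVH hw'VH hvhat huhat hgv hgu
              (by simp only [List.length_cons]; omega)
              (by simp only [List.length_cons]; omega)
              (SVBisim.mono hbisim)
            obtain ⟨y₁, y₂, δ⟩ := b
            exact ⟨(y₁, y₂, δ) :: ((p :: pr) ++ v),
              ⟨hvV, hwVH, _, Or.inl rfl⟩, hQ,
              (y₂, fH ((p :: pr) ++ v)), (y₁, δ), (y₁, δ),
              pH_parent hC hwVH,
              by rw [hcolVU]; exact pH_parent hC hw'VH⟩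
          · rw [List.cons_append] at hUeq
            injection hUeq with e1 e2
            subst e1; subst e2
            cases pr with
            | nil =>
                obtain ⟨x₁, x₂, γ⟩ := p
                exact ⟨v, ⟨hvV, VH_tail hvV, (x₁, x₂, γ), Or.inr rfl⟩,
                  ihP v u (VH_tail hvV) (VH_tail hvU) hvhat huhat
                    (by simp only [List.length_nil] at hlv; omega)
                    (by simp only [List.length_nil] at hlu; omega)
                    (SVBisim.mono hbisim),
                  (x₁, γ), (x₂, fH v), (x₂, fH u),
                  pH_child hC hvV, pH_child hC hvU⟩
            | cons q qr =>
                obtain ⟨x₁, x₂, γ⟩ := p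
                exact ⟨(q :: qr) ++ v,
                  ⟨hvV, VH_tail hvV, (x₁, x₂, γ), Or.inr rfl⟩,
                  ihQ (q :: qr) v u (by simp)
                    (fun x hx => hlast x (by
                      rw [List.getLast?_cons_cons]; exact hx))
                    (VH_tail hvV) (VH_tail hvU) hvhat huhat hgv hgu
                    (by simp only [List.length_cons] at hlv ⊢; omega)
                    (by simp only [List.length_cons] at hlu ⊢; omega)
                    (SVBisim.mono hbisim),
                  (x₁, γ), (x₂, fH ((q :: qr) ++ v)), (x₂, fH ((q :: qr) ++ u)),
                  pH_child hC hvV, pH_child hC hvU⟩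

end Aux

/-- If two nodes of the subgraph `Ĥ_{C,d}`, each at distance `< 2d − t` from
the root, are `t`-SV-bisimilar in `(Ĥ_{C,d}, f_C, p_C)`, then the
corresponding nodes of `H_{C,d}` are `t`-SV-bisimilar in `(H_{C,d}, f_C, p_C)`. -/
theorem bisim_Hhat_to_H (C : Col) (hC : C ≠ Col.G) (d : ℕ) (hd : 2 ≤ d)
    (t : ℕ) (v u : List Nd3)
    (hv : VH C d v) (hu : VH C d u)
    (hvhat : inHat C v) (huhat : inHat C u)
    (hdist : (HhatGraph C d).dist v [] < 2 * d - t)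
    (hdist' : (HhatGraph C d).dist u [] < 2 * d - t)
    (hbisim : SVBisim (HhatGraph C d) (HhatGraph C d) fH fH
      (pHhat C d) (pHhat C d) t v u) :
    SVBisim (HGraph C d) (HGraph C d) fH fH (pH C d) (pH C d) t v u := by
  have h1 := length_le_dist hv hvhat
  have h2 := length_le_dist hu huhat
  exact (mainPQ hC hd t).1 v u hv hu hvhat huhat (by omega) (by omega) hbisim

end Paper
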